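/- Let q ≥ 1 and a ≥ b be real numbers. With signed powers a^r := |a|^{r-1}a, one has (a^{(q+1)/2} - b^{(q+1)/2})^2 ≤ ((q+1)^2 / (4q)) · (a^q - b^q) · (a - b). -/

import Mathlib

open Real

/-- Signed power: `a^r := |a|^(r-1) * a`. -/
noncomputable def spow (a r : ℝ) : ℝ := |a| ^ (r - 1) * a

open MeasureTheory

lemma hasDerivAt_spow {p : ℝ} (hp : 0 ≤ p) (x : ℝ) :
    HasDerivAt (fun t : ℝ => |t| ^ p * t) ((p + 1) * |x| ^ p) x := by
  rcases eq_or_lt_of_le hp with h | hp0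
  · simp only [← h, Real.rpow_zero, one_mul]
    simpa using hasDerivAt_id' x
  rcases eq_or_ne x 0 with rfl | hx
  · rw [hasDerivAt_iff_tendsto_slope]
    have habs : abs (0:ℝ) ^ p = 0 := by simp [Real.zero_rpow hp0.ne']
    rw [habs, mul_zero]
    have hca : ContinuousAt (fun t : ℝ => |t| ^ p) 0 :=
      (Real.continuousAt_rpow_const (|(0:ℝ)|) p (Or.inr hp)).comp continuous_abs.continuousAt
    have hcont : Filter.Tendsto (fun t : ℝ => |t| ^ p) (nhds 0) (nhds 0) := by
      simpa [Real.zero_rpow hp0.ne'] using hca.tendsto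
    refine Filter.Tendsto.congr' ?_ (hcont.mono_left nhdsWithin_le_nhds)
    filter_upwards [self_mem_nhdsWithin] with t ht
    simp only [Set.mem_compl_iff, Set.mem_singleton_iff] at ht
    rw [slope_def_field]; field_simp [ht]; simp
  · have habs : HasDerivAt (fun t : ℝ => |t|) ((SignType.sign x : ℝ)) x := hasDerivAt_abs hx
    have h1 : HasDerivAt (fun t : ℝ => |t| ^ p * t)
        (((SignType.sign x : ℝ) * p * |x| ^ (p - 1)) * x + |x| ^ p * 1) x :=
      (habs.rpow_const (Or.inl (abs_ne_zero.2 hx))).mul (hasDerivAt_id x)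
    convert h1 using 1
    have hsx : (SignType.sign x : ℝ) * x = |x| := by
      rcases hx.lt_or_gt with h | h
      · simp [sign_neg h, abs_of_neg h]
      · simp [sign_pos h, abs_of_pos h]
    have hr : |x| ^ (p - 1) * |x| = |x| ^ p := by
      rw [← Real.rpow_add_one (abs_ne_zero.2 hx)]; ring_nf
    calc (p + 1) * |x| ^ p = p * (|x| ^ (p-1) * |x|) + |x| ^ p := by rw [hr]; ring
    _ = (SignType.sign x : ℝ) * p * |x| ^ (p - 1) * x + |x| ^ p * 1 := by
        rw [mul_one, ← hsx]; ring

lemma continuous_abs_rpow {p : ℝ} (hp : 0 ≤ p) : Continuous (fun t : ℝ => |t| ^ p) :=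
  continuous_abs.rpow_const (fun _ => Or.inr hp)

lemma spow_sub_spow {r : ℝ} (hr : 1 ≤ r) (a b : ℝ) :
    spow a r - spow b r = ∫ t in b..a, r * |t| ^ (r - 1) := by
  rw [intervalIntegral.integral_eq_sub_of_hasDerivAt (f := fun t => |t| ^ (r-1) * t) (f' := fun t => r * |t| ^ (r - 1))
      (fun x _ => by simpa [sub_add_cancel] using hasDerivAt_spow (by linarith : (0:ℝ) ≤ r - 1) x)
      (((continuous_const.mul (continuous_abs_rpow (by linarith : (0:ℝ) ≤ r - 1)))).intervalIntegrable _ _)]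
  rfl


lemma cauchy_key {s : ℝ} (hs : 0 ≤ s) {a b : ℝ} (hab : b ≤ a) :
    (∫ t in b..a, |t| ^ s) ^ 2 ≤ (∫ t in b..a, |t| ^ (s * 2)) * (a - b) := by
  set μ := volume.restrict (Set.Ioc b a) with hμ
  have hf : ∀ t : ℝ, 0 ≤ |t| ^ s := fun t => Real.rpow_nonneg (abs_nonneg t) s
  set C : ℝ := max |a| |b| with hC
  have hbound : ∀ᵐ t ∂μ, ‖|t| ^ s‖ ≤ C ^ s := by
    refine (ae_restrict_iff' measurableSet_Ioc).2 (Filter.Eventually.of_forall fun t ht => ?_)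
    rw [Real.norm_of_nonneg (hf t)]
    refine Real.rpow_le_rpow (abs_nonneg t) ?_ hs
    rw [abs_le]
    constructor
    · calc -C ≤ -|b| := by simp [hC, neg_le_neg_iff, le_max_right]
      _ ≤ b := neg_abs_le b
      _ ≤ t := le_of_lt ht.1
    · calc t ≤ a := ht.2
      _ ≤ |a| := le_abs_self a
      _ ≤ C := le_max_left _ _
  have hmem : MemLp (fun t : ℝ => |t| ^ s) (ENNReal.ofReal 2) μ :=
    MemLp.of_bound ((continuous_abs.rpow_const fun _ => Or.inr hs).aestronglyMeasurable) _ hbound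
  have hmem1 : MemLp (fun _ : ℝ => (1:ℝ)) (ENNReal.ofReal 2) μ := memLp_const 1
  have hpq : (2:ℝ).HolderConjugate 2 := Real.holderConjugate_iff.mpr ⟨by norm_num, by norm_num⟩
  have hcs := integral_mul_le_Lp_mul_Lq_of_nonneg hpq
    (Filter.Eventually.of_forall fun t => hf t)
    (Filter.Eventually.of_forall fun _ => zero_le_one) hmem hmem1
  simp only [mul_one, Real.one_rpow] at hcs
  have hvol : ∫ _ : ℝ, (1:ℝ) ∂μ = a - b := by
    simp [hμ, Real.volume_Ioc, ENNReal.toReal_ofReal (sub_nonneg.2 hab), hab]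
  rw [hvol] at hcs
  have hsq : ∀ t : ℝ, (|t| ^ s) ^ (2:ℝ) = |t| ^ (s * 2) := fun t =>
    (Real.rpow_mul (abs_nonneg t) s 2).symm
  simp only [hsq] at hcs
  have hJ : 0 ≤ ∫ t, |t| ^ (s * 2) ∂μ :=
    integral_nonneg fun t => Real.rpow_nonneg (abs_nonneg t) _
  have hI : 0 ≤ ∫ t, |t| ^ s ∂μ := integral_nonneg fun t => hf t
  rw [intervalIntegral.integral_of_le hab, intervalIntegral.integral_of_le hab]
  calc (∫ t, |t| ^ s ∂μ) ^ 2
      ≤ ((∫ t, |t| ^ (s*2) ∂μ) ^ ((1:ℝ)/2) * (a - b) ^ ((1:ℝ)/2)) ^ 2 := by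
        apply pow_le_pow_left₀ hI hcs
    _ = (∫ t, |t| ^ (s*2) ∂μ) * (a - b) := by
        rw [mul_pow, ← Real.rpow_natCast ((∫ t, |t| ^ (s*2) ∂μ) ^ ((1:ℝ)/2)) 2,
          ← Real.rpow_natCast ((a - b) ^ ((1:ℝ)/2)) 2,
          ← Real.rpow_mul hJ, ← Real.rpow_mul (sub_nonneg.2 hab)]
        norm_num

theorem stmt1 (q a b : ℝ) (hq : 1 ≤ q) (hab : b ≤ a) :
    (spow a ((q + 1) / 2) - spow b ((q + 1) / 2)) ^ 2 ≤
      ((q + 1) ^ 2 / (4 * q)) * (spow a q - spow b q) * (a - b) := by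
  have hq0 : 0 < q := lt_of_lt_of_le one_pos hq
  have hs : 1 ≤ (q + 1) / 2 := by linarith
  have h1 : spow a ((q+1)/2) - spow b ((q+1)/2)
      = ((q+1)/2) * ∫ t in b..a, |t| ^ ((q+1)/2 - 1) := by
    rw [spow_sub_spow hs a b, intervalIntegral.integral_const_mul]
  have h2 : spow a q - spow b q = q * ∫ t in b..a, |t| ^ (q - 1) := by
    rw [spow_sub_spow hq a b, intervalIntegral.integral_const_mul]
  have hexp : ((q+1)/2 - 1) * 2 = q - 1 := by ring
  have key := cauchy_key (s := (q+1)/2 - 1) (by linarith) hab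
  rw [hexp] at key
  rw [h1, h2]
  have he : (q + 1) ^ 2 / (4 * q) * (q * ∫ t in b..a, |t| ^ (q - 1)) * (a - b)
      = ((q+1)/2) ^ 2 * ((∫ t in b..a, |t| ^ (q - 1)) * (a - b)) := by
    field_simp
    ring
  rw [he, mul_pow]
  exact mul_le_mul_of_nonneg_left key (sq_nonneg _)
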